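/- Consider the Gerber–Dickson risk process whose claims follow the geometric distribution f(y) = p(1 − p)^y for y = 0,1,2,…, with 1/2 < p ≤ 1 (so the net profit condition E[Y] = (1−p)/p < 1 holds). Then the ultimate ruin probability is ψ(u) = ((1 − p)/p)^{u+1} for every integer u ≥ 0. -/

import Mathlib

open MeasureTheory ProbabilityTheory Filter

section aux
variable {Ω : Type*} [MeasurableSpace Ω]

def RT (Y : ℕ → Ω → ℕ) (a v T : ℕ) : Set Ω :=
  {ω | ∃ t : ℕ, 1 ≤ t ∧ t ≤ T ∧ (v : ℤ) + t - ∑ j ∈ Finset.range t, (Y (a+j) ω : ℤ) ≤ 0}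

def RS (Y : ℕ → Ω → ℕ) (a v : ℕ) : Set Ω :=
  {ω | ∃ t : ℕ, 1 ≤ t ∧ (v : ℤ) + t - ∑ j ∈ Finset.range t, (Y (a+j) ω : ℤ) ≤ 0}

def AT (Y : ℕ → Ω → ℕ) (a T : ℕ) (g : ℕ → ℕ) : Set Ω :=
  {ω | ∀ j, j < T → Y (a+j) ω = g j}

def CC (v T : ℕ) (g : ℕ → ℕ) : Prop :=
  ∃ t : ℕ, 1 ≤ t ∧ t ≤ T ∧ (v : ℤ) + t - ∑ j ∈ Finset.range t, (g j : ℤ) ≤ 0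

def EXT (T : ℕ) (w : Fin T → ℕ) : ℕ → ℕ := fun j => if h : j < T then w ⟨j, h⟩ else 0

lemma meas_AT (Y : ℕ → Ω → ℕ) (hYmeas : ∀ j, Measurable (Y j)) (a T : ℕ) (g : ℕ → ℕ) :
    MeasurableSet (AT Y a T g) := by
  have : AT Y a T g = ⋂ j ∈ Finset.range T, (Y (a+j)) ⁻¹' {g j} := by
    ext ω; simp [AT, Set.mem_iInter]
  rw [this]
  exact MeasurableSet.biInter (Finset.range T).countable_toSet
    (fun j _ => hYmeas (a+j) (measurableSet_singleton _))

lemma meas_RT (Y : ℕ → Ω → ℕ) (hYmeas : ∀ j, Measurable (Y j)) (a v T : ℕ) :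
    MeasurableSet (RT Y a v T) := by
  have h : RT Y a v T = ⋃ t ∈ Set.Icc 1 T,
      {ω | (v : ℤ) + t - ∑ j ∈ Finset.range t, (Y (a+j) ω : ℤ) ≤ 0} := by
    ext ω; simp only [RT, Set.mem_setOf_eq, Set.mem_iUnion, Set.mem_Icc]
    tauto
  rw [h]
  refine MeasurableSet.biUnion (Set.to_countable _) (fun t _ => ?_)
  have hsm : Measurable fun ω => (v : ℤ) + t - ∑ j ∈ Finset.range t, (Y (a+j) ω : ℤ) := by
    refine Measurable.sub measurable_const ?_
    exact Finset.measurable_sum _ (fun j _ =>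
      (measurable_of_countable (fun n : ℕ => (n : ℤ))).comp (hYmeas (a+j)))
  exact measurableSet_le hsm measurable_const

lemma meas_RS (Y : ℕ → Ω → ℕ) (hYmeas : ∀ j, Measurable (Y j)) (a v : ℕ) :
    MeasurableSet (RS Y a v) := by
  have h : RS Y a v = ⋃ T, RT Y a v T := by
    ext ω; constructor
    · rintro ⟨t, ht1, ht⟩; exact Set.mem_iUnion.2 ⟨t, t, ht1, le_refl t, ht⟩
    · rintro hω
      obtain ⟨T, t, ht1, _, ht⟩ := Set.mem_iUnion.1 hω
      exact ⟨t, ht1, ht⟩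
  rw [h]; exact MeasurableSet.iUnion (fun T => meas_RT Y hYmeas a v T)

lemma RT_subset_RS (Y : ℕ → Ω → ℕ) (a v T : ℕ) : RT Y a v T ⊆ RS Y a v :=
  fun ω ⟨t, ht1, _, ht⟩ => ⟨t, ht1, ht⟩

lemma RS_eq_iUnion (Y : ℕ → Ω → ℕ) (a v : ℕ) : RS Y a v = ⋃ T, RT Y a v T := by
  ext ω; constructor
  · rintro ⟨t, ht1, ht⟩; exact Set.mem_iUnion.2 ⟨t, t, ht1, le_refl t, ht⟩
  · rintro hω
    obtain ⟨T, h⟩ := Set.mem_iUnion.1 hω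
    exact RT_subset_RS Y a v T h

lemma RT_mono (Y : ℕ → Ω → ℕ) (a v : ℕ) : Monotone (RT Y a v) := by
  intro T T' hT ω ⟨t, ht1, ht2, ht⟩
  exact ⟨t, ht1, ht2.trans hT, ht⟩

end aux

section prob
variable {Ω : Type*} [MeasurableSpace Ω] (P : Measure Ω) [IsProbabilityMeasure P]
  (Y : ℕ → Ω → ℕ)

lemma AT_prob (hindep : iIndepFun Y P)
    (hident : ∀ j, IdentDistrib (Y j) (Y 0) P P) (a T : ℕ) (g : ℕ → ℕ) :
    P (AT Y a T g) = ∏ j ∈ Finset.range T, P {ω | Y 0 ω = g j} := by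
  have hset : AT Y a T g = ⋂ i ∈ Finset.Ico a (a+T), Y i ⁻¹' {g (i - a)} := by
    ext ω
    simp only [AT, Set.mem_setOf_eq, Set.mem_iInter, Finset.mem_Ico, Set.mem_preimage,
      Set.mem_singleton_iff]
    constructor
    · rintro h i ⟨hi1, hi2⟩
      have h2 := h (i - a) (by omega)
      rwa [show a + (i - a) = i by omega] at h2
    · intro h j hj
      have := h (a + j) ⟨by omega, by omega⟩
      simpa using this
  rw [hset]
  rw [hindep.measure_inter_preimage_eq_mul (Finset.Ico a (a+T))
    (sets := fun i => {g (i - a)}) (fun i _ => measurableSet_singleton _)]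
  rw [Finset.prod_Ico_eq_prod_range]
  simp only [Nat.add_sub_cancel_left, add_tsub_cancel_left]
  refine Finset.prod_congr rfl (fun j _ => ?_)
  have := (hident (a + j)).measure_mem_eq (s := {g j}) (measurableSet_singleton _)
  exact this

end prob

section prob2
variable {Ω : Type*} [MeasurableSpace Ω] (P : Measure Ω) [IsProbabilityMeasure P]
  (Y : ℕ → Ω → ℕ)

omit [MeasurableSpace Ω] in
lemma sum_eq_of_AT {a T : ℕ} {g : ℕ → ℕ} {ω : Ω} (h : ω ∈ AT Y a T g) {t : ℕ} (ht : t ≤ T) :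
    (∑ j ∈ Finset.range t, (Y (a+j) ω : ℤ)) = ∑ j ∈ Finset.range t, (g j : ℤ) :=
  Finset.sum_congr rfl fun j hj => by
    rw [h j (lt_of_lt_of_le (Finset.mem_range.1 hj) ht)]

lemma CC_congr {v T : ℕ} {g g' : ℕ → ℕ} (h : ∀ j, j < T → g j = g' j) :
    CC v T g ↔ CC v T g' := by
  unfold CC
  constructor <;> rintro ⟨t, ht1, ht2, ht⟩ <;> refine ⟨t, ht1, ht2, ?_⟩ <;>
    [ (rw [show (∑ j ∈ Finset.range t, ((g' j : ℤ))) = ∑ j ∈ Finset.range t, (g j : ℤ)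
        from Finset.sum_congr rfl fun j hj =>
          by rw [h j (lt_of_lt_of_le (Finset.mem_range.1 hj) ht2)]]);
      (rw [show (∑ j ∈ Finset.range t, ((g j : ℤ))) = ∑ j ∈ Finset.range t, (g' j : ℤ)
        from Finset.sum_congr rfl fun j hj =>
          by rw [h j (lt_of_lt_of_le (Finset.mem_range.1 hj) ht2)]]) ] <;>
    exact ht

open Classical in
lemma RT_prob (hYmeas : ∀ j, Measurable (Y j))
    (hindep : iIndepFun Y P)
    (hident : ∀ j, IdentDistrib (Y j) (Y 0) P P) (a v T : ℕ) :
    P (RT Y a v T) = ∑' (w : Fin T → ℕ),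
      (if CC v T (EXT T w) then ∏ j ∈ Finset.range T, P {ω | Y 0 ω = EXT T w j} else 0) := by
  have hcover : RT Y a v T
      = ⋃ (w : Fin T → ℕ), (if CC v T (EXT T w) then AT Y a T (EXT T w) else ∅) := by
    ext ω; constructor
    · rintro ⟨t, ht1, ht2, ht⟩
      refine Set.mem_iUnion.2 ⟨fun j => Y (a + j) ω, ?_⟩
      have hAT : ω ∈ AT Y a T (EXT T (fun j : Fin T => Y (a + j) ω)) := by
        intro j hj; simp [EXT, hj]
      have hCC : CC v T (EXT T (fun j : Fin T => Y (a + j) ω)) := by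
        refine ⟨t, ht1, ht2, ?_⟩
        rwa [← sum_eq_of_AT Y hAT ht2]
      rw [if_pos hCC]; exact hAT
    · intro hω
      obtain ⟨w, hw⟩ := Set.mem_iUnion.1 hω
      by_cases hc : CC v T (EXT T w)
      · rw [if_pos hc] at hw
        obtain ⟨t, ht1, ht2, ht⟩ := hc
        exact ⟨t, ht1, ht2, by rwa [sum_eq_of_AT Y hw ht2]⟩
      · rw [if_neg hc] at hw; exact absurd hw (Set.notMem_empty ω)
  have hdisj : Pairwise (Function.onFun Disjoint
      (fun w : Fin T → ℕ => if CC v T (EXT T w) then AT Y a T (EXT T w) else ∅)) := by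
    intro w w' hww'
    by_cases hc : CC v T (EXT T w) <;> by_cases hc' : CC v T (EXT T w') <;>
      simp only [Function.onFun, hc, hc', if_true, if_false, Set.disjoint_empty,
        Set.empty_disjoint]
    rw [Set.disjoint_left]
    intro ω h1 h2
    obtain ⟨j, hj⟩ := Function.ne_iff.1 hww'
    have e1 := h1 j j.isLt
    have e2 := h2 j j.isLt
    rw [e1] at e2
    simp only [EXT, j.isLt, dif_pos] at e2
    exact hj (by simpa using e2)
  have hmeas : ∀ w : Fin T → ℕ,
      MeasurableSet (if CC v T (EXT T w) then AT Y a T (EXT T w) else ∅) := by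
    intro w
    by_cases hc : CC v T (EXT T w) <;> simp [hc, meas_AT Y hYmeas]
  rw [hcover, measure_iUnion hdisj hmeas]
  refine tsum_congr (fun w => ?_)
  by_cases hc : CC v T (EXT T w) <;> simp [hc, AT_prob P Y hindep hident]

end prob2

section prob3
variable {Ω : Type*} [MeasurableSpace Ω] (P : Measure Ω) [IsProbabilityMeasure P]
  (Y : ℕ → Ω → ℕ)

lemma AT_disjoint {T : ℕ} {a : ℕ} {w w' : Fin T → ℕ} (hww' : w ≠ w') :
    Disjoint (AT Y a T (EXT T w)) (AT Y a T (EXT T w')) := by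
  rw [Set.disjoint_left]
  intro ω h1 h2
  obtain ⟨j, hj⟩ := Function.ne_iff.1 hww'
  have e1 := h1 j j.isLt
  have e2 := h2 j j.isLt
  rw [e1] at e2
  simp only [EXT, j.isLt, dif_pos] at e2
  exact hj (by simpa using e2)

variable (hYmeas : ∀ j, Measurable (Y j))
  (hindep : iIndepFun Y P)
  (hident : ∀ j, IdentDistrib (Y j) (Y 0) P P)

include hYmeas hindep hident

lemma RT_shift (a v T : ℕ) : P (RT Y a v T) = P (RT Y 0 v T) := by
  rw [RT_prob P Y hYmeas hindep hident, RT_prob P Y hYmeas hindep hident]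

lemma RS_sup (a v : ℕ) : P (RS Y a v) = ⨆ T, P (RT Y a v T) := by
  rw [RS_eq_iUnion]
  exact Directed.measure_iUnion ((RT_mono Y a v).directed_le)

lemma RS_shift (a v : ℕ) : P (RS Y a v) = P (RS Y 0 v) := by
  rw [RS_sup P Y hYmeas hindep hident, RS_sup P Y hYmeas hindep hident]
  exact iSup_congr (fun T => RT_shift P Y hYmeas hindep hident a v T)

open Classical in
lemma RT_indep (y v T : ℕ) :
    P ({ω | Y 0 ω = y} ∩ RT Y 1 v T) = P {ω | Y 0 ω = y} * P (RT Y 1 v T) := by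
  set φ : ℕ → ENNReal := fun z => P {ω | Y 0 ω = z} with hφ
  set D : (Fin (T+1) → ℕ) → Prop :=
    fun w => EXT (T+1) w 0 = y ∧ CC v T (fun j => EXT (T+1) w (j+1)) with hD
  have hcover : {ω | Y 0 ω = y} ∩ RT Y 1 v T
      = ⋃ (w : Fin (T+1) → ℕ), (if D w then AT Y 0 (T+1) (EXT (T+1) w) else ∅) := by
    ext ω; constructor
    · rintro ⟨hy, t, ht1, ht2, ht⟩
      refine Set.mem_iUnion.2 ⟨fun j : Fin (T+1) => Y (0 + j) ω, ?_⟩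
      have hAT : ω ∈ AT Y 0 (T+1) (EXT (T+1) (fun j : Fin (T+1) => Y (0 + j) ω)) := by
        intro j hj; simp [EXT, hj]
      have hD1 : D (fun j : Fin (T+1) => Y (0 + j) ω) := by
        constructor
        · simpa [EXT] using hy
        · refine ⟨t, ht1, ht2, ?_⟩
          have key : ∀ j, j < t →
              (EXT (T+1) (fun j : Fin (T+1) => Y (0 + j) ω) (j+1)) = Y (1+j) ω := by
            intro j hj
            have hj1 : j + 1 < T + 1 := by omega
            simp only [EXT, hj1, dif_pos]
            congr 1; omega
          rwa [show (∑ j ∈ Finset.range t,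
              ((EXT (T+1) (fun j : Fin (T+1) => Y (0 + j) ω) (j+1) : ℕ) : ℤ))
              = ∑ j ∈ Finset.range t, ((Y (1+j) ω : ℕ) : ℤ) from
            Finset.sum_congr rfl fun j hj => by
              rw [key j (Finset.mem_range.1 hj)]]
      rw [if_pos hD1]; exact hAT
    · intro hω
      obtain ⟨w, hw⟩ := Set.mem_iUnion.1 hω
      by_cases hc : D w
      · rw [if_pos hc] at hw
        obtain ⟨hc0, t, ht1, ht2, ht⟩ := hc
        constructor
        · have h00 := hw 0 (by omega)
          show Y 0 ω = y
          rw [show (0:ℕ) + 0 = 0 from rfl] at h00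
          rw [h00, hc0]
        · refine ⟨t, ht1, ht2, ?_⟩
          have key : ∀ j, j < t → Y (1+j) ω = EXT (T+1) w (j+1) := by
            intro j hj
            have h1 := hw (j+1) (by omega)
            rw [show (0 : ℕ) + (j+1) = 1 + j by omega] at h1
            exact h1
          rwa [show (∑ j ∈ Finset.range t, ((Y (1+j) ω : ℕ) : ℤ))
              = ∑ j ∈ Finset.range t, ((EXT (T+1) w (j+1) : ℕ) : ℤ) from
            Finset.sum_congr rfl fun j hj => by rw [key j (Finset.mem_range.1 hj)]]
      · rw [if_neg hc] at hw; exact absurd hw (Set.notMem_empty ω)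
  have hsub : ∀ w : Fin (T+1) → ℕ,
      (if D w then AT Y 0 (T+1) (EXT (T+1) w) else ∅) ⊆ AT Y 0 (T+1) (EXT (T+1) w) := by
    intro w; split
    · exact subset_rfl
    · exact Set.empty_subset _
  have hdisj : Pairwise (Function.onFun Disjoint
      (fun w : Fin (T+1) → ℕ => if D w then AT Y 0 (T+1) (EXT (T+1) w) else ∅)) :=
    fun w w' hww' => Disjoint.mono (hsub w) (hsub w') (AT_disjoint Y hww')
  have hmeas : ∀ w : Fin (T+1) → ℕ,
      MeasurableSet (if D w then AT Y 0 (T+1) (EXT (T+1) w) else ∅) := by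
    intro w; split
    · exact meas_AT Y hYmeas _ _ _
    · exact MeasurableSet.empty
  rw [hcover, measure_iUnion hdisj hmeas]
  have hterm : ∀ w : Fin (T+1) → ℕ,
      P (if D w then AT Y 0 (T+1) (EXT (T+1) w) else ∅)
        = if D w then ∏ j ∈ Finset.range (T+1), φ (EXT (T+1) w j) else 0 := by
    intro w
    by_cases hc : D w
    · rw [if_pos hc, if_pos hc, AT_prob P Y hindep hident]
    · rw [if_neg hc, if_neg hc, measure_empty]
  calc (∑' (w : Fin (T+1) → ℕ), P (if D w then AT Y 0 (T+1) (EXT (T+1) w) else ∅))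
      = ∑' (w : Fin (T+1) → ℕ),
          (if D w then ∏ j ∈ Finset.range (T+1), φ (EXT (T+1) w j) else 0) :=
        tsum_congr hterm
    _ = ∑' (z : ℕ × (Fin T → ℕ)),
          (if D (Fin.cons z.1 z.2) then
            ∏ j ∈ Finset.range (T+1), φ (EXT (T+1) (Fin.cons z.1 z.2) j) else 0) := by
        rw [← Equiv.tsum_eq (Fin.consEquiv (fun _ : Fin (T+1) => ℕ))]
        exact tsum_congr (fun z => rfl)
    _ = ∑' (y' : ℕ), ∑' (w' : Fin T → ℕ),
          (if D (Fin.cons y' w') then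
            ∏ j ∈ Finset.range (T+1), φ (EXT (T+1) (Fin.cons y' w') j) else 0) :=
        ENNReal.tsum_prod'
    _ = ∑' (y' : ℕ), ∑' (w' : Fin T → ℕ),
          (if y' = y then
            (if CC v T (EXT T w') then φ y * ∏ j ∈ Finset.range T, φ (EXT T w' j) else 0)
           else 0) := by
        refine tsum_congr (fun y' => tsum_congr (fun w' => ?_))
        have h0 : EXT (T+1) (Fin.cons y' w') 0 = y' := by simp [EXT]
        have hsucc : ∀ j, j < T → EXT (T+1) (Fin.cons y' w') (j+1) = EXT T w' j := by
          intro j hj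
          have hj1 : j + 1 < T + 1 := by omega
          simp only [EXT, hj, hj1, dif_pos]
          rfl
        have hCCiff : CC v T (fun j => EXT (T+1) (Fin.cons y' w') (j+1)) ↔ CC v T (EXT T w') :=
          CC_congr hsucc
        by_cases hy' : y' = y
        · subst hy'
          by_cases hcc : CC v T (EXT T w')
          · rw [if_pos (show D (Fin.cons y' w') from ⟨h0, hCCiff.2 hcc⟩), if_pos rfl,
              if_pos hcc]
            rw [Finset.prod_range_succ', h0, mul_comm]
            congr 1
            exact Finset.prod_congr rfl (fun j hj => by
              rw [hsucc j (Finset.mem_range.1 hj)])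
          · rw [if_neg (show ¬ D (Fin.cons y' w') from fun h => hcc (hCCiff.1 h.2)),
              if_pos rfl, if_neg hcc]
        · rw [if_neg (show ¬ D (Fin.cons y' w') from fun h => hy' (h0 ▸ h.1)), if_neg hy']
    _ = ∑' (y' : ℕ), (if y' = y then
            φ y * ∑' (w' : Fin T → ℕ),
              (if CC v T (EXT T w') then ∏ j ∈ Finset.range T, φ (EXT T w' j) else 0)
          else 0) := by
        refine tsum_congr (fun y' => ?_)
        by_cases hy' : y' = y
        · simp only [if_pos hy']
          rw [← ENNReal.tsum_mul_left]
          refine tsum_congr (fun w' => ?_)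
          by_cases hcc : CC v T (EXT T w')
          · rw [if_pos hcc, if_pos hcc]
          · rw [if_neg hcc, if_neg hcc, mul_zero]
        · simp only [if_neg hy', tsum_zero]
    _ = φ y * ∑' (w' : Fin T → ℕ),
          (if CC v T (EXT T w') then ∏ j ∈ Finset.range T, φ (EXT T w' j) else 0) :=
        tsum_ite_eq y _
    _ = φ y * P (RT Y 0 v T) := by
        rw [RT_prob P Y hYmeas hindep hident 0 v T]
    _ = φ y * P (RT Y 1 v T) := by
        rw [RT_shift P Y hYmeas hindep hident 1 v T]

end prob3

section prob4
variable {Ω : Type*} [MeasurableSpace Ω] (P : Measure Ω) [IsProbabilityMeasure P]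
  (Y : ℕ → Ω → ℕ)
  (hYmeas : ∀ j, Measurable (Y j))
  (hindep : iIndepFun Y P)
  (hident : ∀ j, IdentDistrib (Y j) (Y 0) P P)

include hYmeas hindep hident

lemma RS_indep (y v : ℕ) :
    P ({ω | Y 0 ω = y} ∩ RS Y 1 v) = P {ω | Y 0 ω = y} * P (RS Y 1 v) := by
  have hun : {ω | Y 0 ω = y} ∩ RS Y 1 v = ⋃ T, ({ω | Y 0 ω = y} ∩ RT Y 1 v T) := by
    rw [RS_eq_iUnion, Set.inter_iUnion]
  have hmono : Monotone (fun T => {ω | Y 0 ω = y} ∩ RT Y 1 v T) :=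
    fun T T' h => Set.inter_subset_inter subset_rfl (RT_mono Y 1 v h)
  rw [hun, Directed.measure_iUnion hmono.directed_le]
  rw [RS_sup P Y hYmeas hindep hident, ENNReal.mul_iSup]
  exact iSup_congr (fun T => RT_indep P Y hYmeas hindep hident y v T)

omit hindep hident in
lemma TL_prob (u : ℕ) :
    P {ω | u < Y 0 ω} = ∑' k : ℕ, P {ω | Y 0 ω = u + 1 + k} := by
  have hun : {ω | u < Y 0 ω} = ⋃ k : ℕ, {ω | Y 0 ω = u + 1 + k} := by
    ext ω
    simp only [Set.mem_setOf_eq, Set.mem_iUnion]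
    constructor
    · intro h; exact ⟨Y 0 ω - (u+1), by omega⟩
    · rintro ⟨k, hk⟩; omega
  rw [hun, measure_iUnion]
  · intro k k' hkk'
    rw [Function.onFun, Set.disjoint_left]
    intro ω h1 h2
    simp only [Set.mem_setOf_eq] at h1 h2
    omega
  · intro k
    exact hYmeas 0 (measurableSet_singleton _)

lemma RS_decomp (u : ℕ) :
    P (RS Y 0 u) = P {ω | u < Y 0 ω}
      + ∑ y ∈ Finset.range (u+1), P {ω | Y 0 ω = y} * P (RS Y 0 (u+1-y)) := by
  have hshift : ∀ (t : ℕ) (ω : Ω), (∑ j ∈ Finset.range (t+1), (Y (0+j) ω : ℤ))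
      = (Y 0 ω : ℤ) + ∑ j ∈ Finset.range t, (Y (1+j) ω : ℤ) := by
    intro t ω
    rw [Finset.sum_range_succ']
    have : (∑ j ∈ Finset.range t, (Y (0+(j+1)) ω : ℤ))
        = ∑ j ∈ Finset.range t, (Y (1+j) ω : ℤ) :=
      Finset.sum_congr rfl (fun j _ => by rw [show 0+(j+1) = 1+j by omega])
    rw [this, add_comm]
  have hset : RS Y 0 u = {ω | u < Y 0 ω}
      ∪ ⋃ (y : Fin (u+1)), ({ω | Y 0 ω = (y : ℕ)} ∩ RS Y 1 (u+1-(y:ℕ))) := by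
    ext ω
    constructor
    · rintro ⟨t, ht1, ht⟩
      by_cases hY : u < Y 0 ω
      · exact Or.inl hY
      · push_neg at hY
        refine Or.inr (Set.mem_iUnion.2 ⟨⟨Y 0 ω, by omega⟩, rfl, ?_⟩)
        obtain ⟨s, rfl⟩ : ∃ s, t = s + 1 := ⟨t - 1, by omega⟩
        have hs1 : 1 ≤ s := by
          by_contra hs
          have hs0 : s = 0 := by omega
          subst hs0
          simp only [Nat.zero_add, Finset.sum_range_one] at ht
          have h00 : Y (0+0) ω = Y 0 ω := rfl
          omega
        refine ⟨s, hs1, ?_⟩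
        rw [hshift s ω] at ht
        have hc : ((u + 1 - Y 0 ω : ℕ) : ℤ) = (u : ℤ) + 1 - (Y 0 ω : ℤ) := by omega
        rw [hc]
        omega
    · rintro (hY | hY)
      · refine ⟨1, le_refl 1, ?_⟩
        simp only [Finset.range_one, Finset.sum_singleton]
        have : Y (0+0) ω = Y 0 ω := rfl
        rw [this]
        simp only [Set.mem_setOf_eq] at hY
        omega
      · obtain ⟨y, hy, s, hs1, hs⟩ := Set.mem_iUnion.1 hY
        simp only [Set.mem_setOf_eq] at hy
        refine ⟨s+1, by omega, ?_⟩
        rw [hshift s ω, hy]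
        have hyu : (y : ℕ) ≤ u := by omega
        have hc : ((u + 1 - (y:ℕ) : ℕ) : ℤ) = (u : ℤ) + 1 - ((y:ℕ) : ℤ) := by omega
        rw [hc] at hs
        push_cast
        push_cast at hs
        omega
  rw [hset]
  have hdisj2 : Pairwise (Function.onFun Disjoint
      (fun y : Fin (u+1) => {ω | Y 0 ω = (y:ℕ)} ∩ RS Y 1 (u+1-(y:ℕ)))) := by
    intro y y' hyy'
    rw [Function.onFun, Set.disjoint_left]
    rintro ω ⟨h1, _⟩ ⟨h2, _⟩
    simp only [Set.mem_setOf_eq] at h1 h2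
    exact hyy' (Fin.ext (by omega))
  have hmeasy : ∀ y : Fin (u+1),
      MeasurableSet ({ω | Y 0 ω = (y:ℕ)} ∩ RS Y 1 (u+1-(y:ℕ))) :=
    fun y => (hYmeas 0 (measurableSet_singleton _)).inter (meas_RS Y hYmeas 1 _)
  have hdisj1 : Disjoint {ω | u < Y 0 ω}
      (⋃ (y : Fin (u+1)), ({ω | Y 0 ω = (y:ℕ)} ∩ RS Y 1 (u+1-(y:ℕ)))) := by
    rw [Set.disjoint_left]
    intro ω h1 h2
    obtain ⟨y, hy, _⟩ := Set.mem_iUnion.1 h2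
    simp only [Set.mem_setOf_eq] at h1 hy
    have := y.isLt
    omega
  rw [measure_union hdisj1 (MeasurableSet.iUnion hmeasy), measure_iUnion hdisj2 hmeasy]
  congr 1
  rw [tsum_fintype, ← Fin.sum_univ_eq_sum_range (fun y => P {ω | Y 0 ω = y} * P (RS Y 0 (u+1-y)))]
  refine Finset.sum_congr rfl (fun y _ => ?_)
  rw [RS_indep P Y hYmeas hindep hident (y:ℕ) (u+1-(y:ℕ)),
    RS_shift P Y hYmeas hindep hident 1 (u+1-(y:ℕ))]

end prob4

section alg

lemma geom_partial {p : ℝ} (hp0 : p ≠ 0) (n : ℕ) :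
    ∑ y ∈ Finset.range n, p * (1-p)^y = 1 - (1-p)^n := by
  induction n with
  | zero => simp
  | succ n ih =>
    rw [Finset.sum_range_succ, ih, pow_succ]
    ring

lemma key_alg {p : ℝ} (hp0 : 0 < p) (u : ℕ) :
    (1-p)^(u+1) + ∑ y ∈ Finset.range (u+1), p*(1-p)^y * ((1-p)/p)^((u+1-y)+1)
      = ((1-p)/p)^(u+1) := by
  have hpne : p ≠ 0 := ne_of_gt hp0
  induction u with
  | zero =>
    norm_num [Finset.sum_range_one]
    field_simp
    ring
  | succ u ih =>
    rw [Finset.sum_range_succ]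
    have hlast : (u+1+1-(u+1)) + 1 = 2 := by omega
    rw [hlast]
    have hterm : ∀ y ∈ Finset.range (u+1),
        p*(1-p)^y * ((1-p)/p)^((u+1+1-y)+1)
          = ((1-p)/p) * (p*(1-p)^y * ((1-p)/p)^((u+1-y)+1)) := by
      intro y hy
      have hy' : y ≤ u := by simpa [Nat.lt_succ_iff] using Finset.mem_range.1 hy
      have he : (u+1+1-y) + 1 = ((u+1-y)+1) + 1 := by omega
      rw [he, pow_succ]
      ring
    rw [Finset.sum_congr rfl hterm, ← Finset.mul_sum]
    have hsum : ∑ y ∈ Finset.range (u+1), p*(1-p)^y * ((1-p)/p)^((u+1-y)+1)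
        = ((1-p)/p)^(u+1) - (1-p)^(u+1) := by linarith [ih]
    rw [hsum]
    rw [div_pow, div_pow, div_pow]
    field_simp
    ring

end alg

section real
variable {Ω : Type*} [MeasurableSpace Ω] (P : Measure Ω) [IsProbabilityMeasure P]
  (Y : ℕ → Ω → ℕ)
  (hYmeas : ∀ j, Measurable (Y j))
  (hindep : iIndepFun Y P)
  (hident : ∀ j, IdentDistrib (Y j) (Y 0) P P)
  {p : ℝ} (hp : 1 / 2 < p) (hp1 : p ≤ 1)
  (hf : ∀ y : ℕ, (P {ω | Y 0 ω = y}).toReal = p * (1 - p) ^ y)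

include hYmeas hp hp1 hf

lemma phi_eq (y : ℕ) : P {ω | Y 0 ω = y} = ENNReal.ofReal (p * (1-p)^y) := by
  rw [← hf y, ENNReal.ofReal_toReal (measure_ne_top P _)]

lemma tail_eq (u : ℕ) : P {ω | u < Y 0 ω} = ENNReal.ofReal ((1-p)^(u+1)) := by
  have hp0 : (0:ℝ) < p := by linarith
  have h01 : (0:ℝ) ≤ 1 - p := by linarith
  have h11 : (1:ℝ) - p < 1 := by linarith
  rw [TL_prob P Y hYmeas u]
  have h1 : ∀ k : ℕ, P {ω | Y 0 ω = u + 1 + k} = ENNReal.ofReal (p * (1-p)^(u+1+k)) :=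
    fun k => phi_eq P Y hYmeas hp hp1 hf (u+1+k)
  rw [tsum_congr h1]
  have hsumm : Summable (fun k : ℕ => p * (1-p)^(u+1+k)) := by
    have : (fun k : ℕ => p * (1-p)^(u+1+k)) = fun k => (p * (1-p)^(u+1)) * (1-p)^k := by
      funext k; rw [pow_add]; ring
    rw [this]
    exact (summable_geometric_of_lt_one h01 h11).mul_left _
  rw [← ENNReal.ofReal_tsum_of_nonneg
    (fun k => by positivity) hsumm]
  congr 1
  have : (fun k : ℕ => p * (1-p)^(u+1+k)) = fun k => (p * (1-p)^(u+1)) * (1-p)^k := by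
    funext k; rw [pow_add]; ring
  rw [this, tsum_mul_left, tsum_geometric_of_lt_one h01 h11]
  rw [show (1:ℝ) - (1-p) = p by ring, mul_comm p, mul_assoc, mul_inv_cancel₀ hp0.ne', mul_one]

include hYmeas hindep hident

lemma rho_rec (u : ℕ) :
    (P (RS Y 0 u)).toReal = (1-p)^(u+1)
      + ∑ y ∈ Finset.range (u+1), p*(1-p)^y * (P (RS Y 0 (u+1-y))).toReal := by
  have h01 : (0:ℝ) ≤ 1 - p := by linarith
  rw [RS_decomp P Y hYmeas hindep hident u]
  rw [ENNReal.toReal_add (measure_ne_top P _) ?hsum]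
  case hsum =>
    exact (ENNReal.sum_lt_top.2 (fun y _ =>
      ENNReal.mul_lt_top (measure_lt_top P _) (measure_lt_top P _))).ne
  congr 1
  · rw [tail_eq P Y hYmeas hp hp1 hf u, ENNReal.toReal_ofReal (by positivity)]
  · rw [ENNReal.toReal_sum (fun y _ =>
      ENNReal.mul_ne_top (measure_ne_top P _) (measure_ne_top P _))]
    exact Finset.sum_congr rfl (fun y _ => by rw [ENNReal.toReal_mul, hf y])

lemma rho_tendsto :
    Filter.Tendsto (fun u => (P (RS Y 0 u)).toReal) Filter.atTop (nhds 0) := by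
  have hp0 : (0:ℝ) < p := by linarith
  have h01 : (0:ℝ) ≤ 1 - p := by linarith
  have h11 : (1:ℝ) - p < 1 := by linarith
  have hnorm : ‖1 - p‖ < 1 := by rw [Real.norm_eq_abs, abs_of_nonneg h01]; exact h11
  set X : ℕ → Ω → ℝ := fun i ω => (Y i ω : ℝ) with hX
  have hmcast : Measurable (fun n : ℕ => (n : ℝ)) := measurable_of_countable _
  have hXmeas : ∀ i, Measurable (X i) := fun i => hmcast.comp (hYmeas i)
  -- the lintegral of X 0
  have hlint : ∫⁻ ω, ENNReal.ofReal (X 0 ω) ∂P = ENNReal.ofReal ((1-p)/p) := by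
    have hcast : ∀ ω, ENNReal.ofReal (X 0 ω) = ((Y 0 ω : ℕ) : ENNReal) := by
      intro ω; rw [hX]; exact ENNReal.ofReal_natCast _
    rw [lintegral_congr hcast]
    have hmap : ∫⁻ ω, ((Y 0 ω : ℕ) : ENNReal) ∂P
        = ∫⁻ n, (n : ENNReal) ∂(P.map (Y 0)) := by
      rw [lintegral_map (measurable_of_countable _) (hYmeas 0)]
    rw [hmap, lintegral_countable']
    have hsing : ∀ n : ℕ, (P.map (Y 0)) {n} = ENNReal.ofReal (p * (1-p)^n) := by
      intro n
      rw [Measure.map_apply (hYmeas 0) (measurableSet_singleton n)]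
      exact phi_eq P Y hYmeas hp hp1 hf n
    have hterm : ∀ n : ℕ, (n : ENNReal) * (P.map (Y 0)) {n}
        = ENNReal.ofReal ((n : ℝ) * (p * (1-p)^n)) := by
      intro n
      rw [hsing n, ← ENNReal.ofReal_natCast n,
        ← ENNReal.ofReal_mul (by positivity)]
    rw [tsum_congr hterm]
    have hsumm1 : Summable (fun n : ℕ => (n:ℝ) * (1-p)^n) := by
      simpa using summable_pow_mul_geometric_of_norm_lt_one 1 hnorm
    have hfeq : (fun n : ℕ => (n : ℝ) * (p * (1-p)^n))
        = fun n : ℕ => p * ((n:ℝ) * (1-p)^n) := by funext n; ring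
    have hsumm : Summable (fun n : ℕ => (n : ℝ) * (p * (1-p)^n)) := by
      rw [hfeq]; exact hsumm1.mul_left p
    rw [← ENNReal.ofReal_tsum_of_nonneg (fun n => by positivity) hsumm]
    congr 1
    rw [hfeq, tsum_mul_left, tsum_coe_mul_geometric_of_norm_lt_one hnorm]
    have : 1 - (1 - p) = p := by ring
    rw [this]
    field_simp
  have hXnonneg : ∀ ω, 0 ≤ X 0 ω := fun ω => Nat.cast_nonneg _
  have hint : Integrable (X 0) P := by
    refine ⟨(hXmeas 0).aestronglyMeasurable, ?_⟩
    rw [hasFiniteIntegral_iff_ofReal (Filter.Eventually.of_forall hXnonneg)]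
    rw [hlint]
    exact ENNReal.ofReal_lt_top
  have hmean : ∫ ω, X 0 ω ∂P = (1-p)/p := by
    rw [integral_eq_lintegral_of_nonneg_ae (Filter.Eventually.of_forall hXnonneg)
      (hXmeas 0).aestronglyMeasurable, hlint,
      ENNReal.toReal_ofReal (by positivity)]
  have hpair : Pairwise (Function.onFun (IndepFun · · P) X) := by
    intro i j hij
    exact (hindep.indepFun hij).comp hmcast hmcast
  have hident' : ∀ i, IdentDistrib (X i) (X 0) P P := fun i => (hident i).comp hmcast
  have hslln := strong_law_ae_real X hint hpair hident'
  rw [hmean] at hslln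
  have hm1 : (1-p)/p < 1 := (div_lt_one hp0).2 (by linarith)
  -- almost surely, the intersection of all ruin events fails
  have hnull : P (⋂ u, RS Y 0 u) = 0 := by
    rw [measure_eq_zero_iff_ae_notMem]
    filter_upwards [hslln] with ω hω
    intro hmem
    have hev := hω.eventually_lt_const hm1
    obtain ⟨N, hN⟩ := Filter.eventually_atTop.1 hev
    set B : ℕ := Finset.sup (Finset.range (N+2)) (fun t => ∑ j ∈ Finset.range t, Y (0+j) ω)
      with hB
    have hmem' := Set.mem_iInter.1 hmem (B+1)
    obtain ⟨t, ht1, ht⟩ := hmem'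
    have hsum_cast : (∑ j ∈ Finset.range t, (Y (0+j) ω : ℤ))
        = ((∑ j ∈ Finset.range t, Y (0+j) ω : ℕ) : ℤ) := by
      push_cast; rfl
    rw [hsum_cast] at ht
    have hge : (B+1) + t ≤ ∑ j ∈ Finset.range t, Y (0+j) ω := by omega
    rcases le_or_gt t (N+1) with hcase | hcase
    · have hle : (∑ j ∈ Finset.range t, Y (0+j) ω) ≤ B :=
        Finset.le_sup (f := fun t => ∑ j ∈ Finset.range t, Y (0+j) ω)
          (Finset.mem_range.2 (by omega))
      omega
    · have htN : t ≥ N := by omega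
      have hlt := hN t htN
      have ht0 : (0:ℝ) < t := by positivity
      have hsum_lt : (∑ i ∈ Finset.range t, X i ω) < t := by
        rw [div_lt_one ht0] at hlt
        exact hlt
      have hsum_eq : (∑ i ∈ Finset.range t, X i ω)
          = ((∑ j ∈ Finset.range t, Y (0+j) ω : ℕ) : ℝ) := by
        push_cast
        exact Finset.sum_congr rfl (fun j _ => by rw [Nat.zero_add])
      rw [hsum_eq] at hsum_lt
      have : (∑ j ∈ Finset.range t, Y (0+j) ω) < t := by exact_mod_cast hsum_lt
      omega
  have hanti : Antitone (fun u => RS Y 0 u) := by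
    intro u u' huu' ω ⟨t, ht1, ht⟩
    refine ⟨t, ht1, ?_⟩
    have : (u:ℤ) ≤ (u':ℤ) := by exact_mod_cast huu'
    omega
  have htend : Filter.Tendsto (fun u => P (RS Y 0 u)) Filter.atTop (nhds 0) := by
    have := tendsto_measure_iInter_atTop
      (fun u => (meas_RS Y hYmeas 0 u).nullMeasurableSet) hanti ⟨0, measure_ne_top P _⟩
    rwa [hnull] at this
  have := (ENNReal.tendsto_toReal (a := 0) (by simp)).comp htend
  simpa [Function.comp_def] using this

end real

/-- For the Gerber–Dickson risk process with geometric claims `f(y) = p(1−p)^y`,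
`1/2 < p ≤ 1`, the ruin probability is `ψ(u) = ((1 − p)/p)^{u+1}` for all `u ≥ 0`. -/
theorem stmt_17
    {Ω : Type*} [MeasurableSpace Ω] (P : Measure Ω) [IsProbabilityMeasure P]
    (Y : ℕ → Ω → ℕ) (hYmeas : ∀ j, Measurable (Y j))
    (hindep : iIndepFun Y P)
    (hident : ∀ j, IdentDistrib (Y j) (Y 0) P P)
    (p : ℝ) (hp : 1 / 2 < p) (hp1 : p ≤ 1)
    (hf : ∀ y : ℕ, (P {ω | Y 0 ω = y}).toReal = p * (1 - p) ^ y)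
    (ψ : ℕ → ℝ)
    (hψ : ∀ u : ℕ, ψ u = (P {ω | ∃ t : ℕ, 1 ≤ t ∧
        (u : ℤ) + t - ∑ j ∈ Finset.range t, (Y j ω : ℤ) ≤ 0}).toReal) :
    ∀ u : ℕ, ψ u = ((1 - p) / p) ^ (u + 1) := by
  have hp0 : (0:ℝ) < p := by linarith
  have h01 : (0:ℝ) ≤ 1 - p := by linarith
  -- identify ψ with the toReal of the ruin probability
  have hψρ : ∀ u, ψ u = (P (RS Y 0 u)).toReal := by
    intro u
    rw [hψ u]
    congr 2
    ext ω
    simp only [RS, Set.mem_setOf_eq]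
    constructor <;> rintro ⟨t, ht1, ht⟩ <;> refine ⟨t, ht1, ?_⟩ <;>
      [ (rwa [show (∑ j ∈ Finset.range t, (Y j ω : ℤ))
          = ∑ j ∈ Finset.range t, (Y (0+j) ω : ℤ) from
          Finset.sum_congr rfl (fun j _ => by rw [Nat.zero_add])] at ht);
        (rwa [show (∑ j ∈ Finset.range t, (Y (0+j) ω : ℤ))
          = ∑ j ∈ Finset.range t, (Y j ω : ℤ) from
          Finset.sum_congr rfl (fun j _ => by rw [Nat.zero_add])] at ht) ]
  have hrec : ∀ u, ψ u = (1-p)^(u+1)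
      + ∑ y ∈ Finset.range (u+1), p*(1-p)^y * ψ (u+1-y) := by
    intro u
    rw [hψρ u, rho_rec P Y hYmeas hindep hident hp hp1 hf u]
    congr 1
    exact Finset.sum_congr rfl (fun y _ => by rw [hψρ (u+1-y)])
  have htendψ : Filter.Tendsto ψ Filter.atTop (nhds 0) := by
    have := rho_tendsto P Y hYmeas hindep hident hp hp1 hf
    have heq : ψ = fun u => (P (RS Y 0 u)).toReal := funext hψρ
    rwa [heq]
  have hψ01 : ∀ u, 0 ≤ ψ u ∧ ψ u ≤ 1 := by
    intro u
    rw [hψρ u]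
    constructor
    · exact ENNReal.toReal_nonneg
    · have h1 : P (RS Y 0 u) ≤ 1 := prob_le_one
      calc (P (RS Y 0 u)).toReal ≤ (1:ENNReal).toReal :=
        ENNReal.toReal_mono (by simp) h1
      _ = 1 := by simp
  rcases eq_or_lt_of_le hp1 with hpeq | hplt
  · -- p = 1
    subst hpeq
    intro u
    have hq : (1:ℝ) - 1 = 0 := by norm_num
    have hstep : ∀ v, ψ v = ψ (v+1) := by
      intro v
      rw [hrec v]
      rw [Finset.sum_eq_single 0 ?h1 ?h2]
      · norm_num
      case h1 =>
        intro y _ hy0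
        rw [hq, zero_pow hy0]
        ring
      case h2 => intro h; simp at h
    have hconst : ∀ n, ψ u = ψ (n + u) := by
      intro n
      induction n with
      | zero => rw [Nat.zero_add]
      | succ n ih =>
        rw [Nat.succ_add]
        exact ih.trans (hstep (n+u))
    have h1 : Filter.Tendsto (fun n => ψ (n + u)) Filter.atTop (nhds 0) :=
      htendψ.comp (tendsto_add_atTop_nat u)
    have h2 : Filter.Tendsto (fun n : ℕ => ψ u) Filter.atTop (nhds (ψ u)) :=
      tendsto_const_nhds
    have h3 : (fun n : ℕ => ψ u) = fun n => ψ (n + u) := funext hconst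
    rw [h3] at h2
    have := tendsto_nhds_unique h2 h1
    rw [this, hq]
    rw [zero_div, zero_pow (by omega)]
  · -- p < 1
    have hq0 : (0:ℝ) < 1 - p := by linarith
    set r : ℝ := (1-p)/p with hr
    have hr0 : 0 ≤ r := div_nonneg h01 hp0.le
    have hr1 : r < 1 := (div_lt_one hp0).2 (by linarith)
    set g : ℕ → ℝ := fun u => ψ u - r^(u+1) with hg
    have hgrec : ∀ u, g u = ∑ y ∈ Finset.range (u+1), p*(1-p)^y * g (u+1-y) := by
      intro u
      have halg := key_alg hp0 u
      have : g u = ((1-p)^(u+1) + ∑ y ∈ Finset.range (u+1), p*(1-p)^y * ψ (u+1-y))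
          - ((1-p)^(u+1) + ∑ y ∈ Finset.range (u+1), p*(1-p)^y * r^((u+1-y)+1)) := by
        rw [hg]
        simp only
        rw [← hrec u, ← halg]
      rw [this, add_sub_add_left_eq_sub, ← Finset.sum_sub_distrib]
      refine Finset.sum_congr rfl (fun y _ => ?_)
      rw [hg]
      ring
    have hgtend : Filter.Tendsto g Filter.atTop (nhds 0) := by
      have h2 : Filter.Tendsto (fun u : ℕ => r^(u+1)) Filter.atTop (nhds 0) :=
        (tendsto_pow_atTop_nhds_zero_of_lt_one hr0 hr1).comp (tendsto_add_atTop_nat 1)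
      have := htendψ.sub h2
      simpa using this
    have hb : ∀ u, |g u| ≤ 2 := by
      intro u
      have h1 := hψ01 u
      have h2 : 0 ≤ r^(u+1) := pow_nonneg hr0 _
      have h3 : r^(u+1) ≤ 1 := pow_le_one₀ hr0 hr1.le
      rw [hg, abs_le]
      constructor <;> simp only <;> nlinarith
    have hbdd : BddAbove (Set.range (fun u => |g u|)) := by
      refine ⟨2, ?_⟩
      rintro x ⟨u, rfl⟩
      exact hb u
    set c : ℝ := ⨆ u, |g u| with hc
    have hc_ub : ∀ u, |g u| ≤ c := fun u => le_ciSup hbdd u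
    have hc0 : 0 ≤ c := (abs_nonneg _).trans (hc_ub 0)
    have hczero : c = 0 := by
      by_contra hcne
      have hcpos : 0 < c := lt_of_le_of_ne hc0 (Ne.symm hcne)
      -- eventually |g u| ≤ c/2
      obtain ⟨N, hN⟩ : ∃ N, ∀ u ≥ N, |g u| ≤ c/2 := by
        have := Metric.tendsto_atTop.1 hgtend (c/2) (by linarith)
        obtain ⟨N, hN⟩ := this
        exact ⟨N, fun u hu => by
          have := hN u hu
          rw [Real.dist_eq, sub_zero] at this
          linarith⟩
      have hne : (Finset.range (N+1)).Nonempty := ⟨0, Finset.mem_range.2 (by omega)⟩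
      obtain ⟨u₀, hu₀mem, hu₀⟩ := Finset.exists_mem_eq_sup' hne (fun u => |g u|)
      set m : ℝ := (Finset.range (N+1)).sup' hne (fun u => |g u|) with hm
      have hcm : c ≤ max m (c/2) := by
        refine ciSup_le (fun u => ?_)
        rcases le_or_gt u N with h | h
        · exact le_max_of_le_left
            (Finset.le_sup' (f := fun v => |g v|) (Finset.mem_range.2 (Nat.lt_succ_of_le h)))
        · exact le_max_of_le_right (hN u h.le)
      have hcm' : c ≤ m := by
        rcases max_cases m (c/2) with ⟨he, _⟩ | ⟨he, _⟩
        · rwa [he] at hcm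
        · rw [he] at hcm; linarith
      have hmc : m ≤ c := hu₀ ▸ hc_ub u₀
      have hgu₀ : |g u₀| = c := by rw [← hu₀]; linarith
      -- now derive a contradiction from the recursion at u₀
      have hstep : |g u₀| ≤ (1 - (1-p)^(u₀+1)) * c := by
        rw [hgrec u₀]
        calc |∑ y ∈ Finset.range (u₀+1), p*(1-p)^y * g (u₀+1-y)|
            ≤ ∑ y ∈ Finset.range (u₀+1), |p*(1-p)^y * g (u₀+1-y)| :=
              Finset.abs_sum_le_sum_abs _ _
          _ ≤ ∑ y ∈ Finset.range (u₀+1), p*(1-p)^y * c := by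
              refine Finset.sum_le_sum (fun y _ => ?_)
              rw [abs_mul]
              have h1 : |p*(1-p)^y| = p*(1-p)^y := abs_of_nonneg (by positivity)
              rw [h1]
              exact mul_le_mul_of_nonneg_left (hc_ub _) (by positivity)
          _ = (1 - (1-p)^(u₀+1)) * c := by
              rw [← Finset.sum_mul, geom_partial (ne_of_gt hp0)]
      rw [hgu₀] at hstep
      have hpow : 0 < (1-p)^(u₀+1) := pow_pos hq0 _
      nlinarith
    intro u
    have : |g u| = 0 := le_antisymm (hczero ▸ hc_ub u) (abs_nonneg _)
    have hgu : g u = 0 := abs_eq_zero.1 this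
    rw [hg] at hgu
    simp only at hgu
    linarith [hgu]
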